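/- Let λ > 2. For every F_{I^J}-periodic orbit x₁, …, xₙ with associated matrices A₁, …, Aₙ, the product A := Aₙ·…·A₁ (an element of the triangle group Γ̃_λ, with det A ∈ {1, −1}) is hyperbolic in the sense that |tr(A²)| > 2; equivalently, if det A = 1 then |tr A| > 2, and if det A = −1 then tr A ≠ 0. Moreover the Möbius transformation of A fixes x₁. -/

import Mathlib

open Matrix

/-- The Möbius action of a real 2×2 matrix on real numbers, `g.x = (ax+b)/(cx+d)`. -/
noncomputable def moebiusM (g : Matrix (Fin 2) (Fin 2) ℝ) (x : ℝ) : ℝ :=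
  (g 0 0 * x + g 0 1) / (g 1 0 * x + g 1 1)

/-- The denominator `cx + d` of the Möbius action. -/
def moebiusMDenom (g : Matrix (Fin 2) (Fin 2) ℝ) (x : ℝ) : ℝ :=
  g 1 0 * x + g 1 1

/-- `x : Fin (n+1) → ℝ` is an `F_{I^J}`-periodic orbit (for the billiard flow on the
triangle surface) with associated matrices `A : Fin (n+1) → Γ̃_λ`: for each `k`
(cyclically), either `xₖ ∈ (−1,0)` and `Aₖ = g₂ = !![λ,1;-1,0]`, or `xₖ ∈ (0,1)` and
`Aₖ = q = g₂J = !![-λ,1;1,0]`, or `xₖ ∈ (−1+mλ, −1+(m+1)λ)` and `Aₖ = T⁻ᵐ` for some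
`m ≥ 1`; and `Aₖ.xₖ = xₖ₊₁` (with nonvanishing denominator). -/
def IsFIJPeriodicOrbit (lam : ℝ) (n : ℕ)
    (x : Fin (n + 1) → ℝ) (A : Fin (n + 1) → Matrix (Fin 2) (Fin 2) ℝ) : Prop :=
  ∀ k : Fin (n + 1),
    ((x k ∈ Set.Ioo (-1 : ℝ) 0 ∧ A k = !![lam, 1; -1, 0]) ∨
      (x k ∈ Set.Ioo (0 : ℝ) 1 ∧ A k = !![-lam, 1; 1, 0]) ∨
      (∃ m : ℕ, 1 ≤ m ∧ x k ∈ Set.Ioo (-1 + m * lam) (-1 + (m + 1) * lam) ∧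
        A k = (!![1, -lam; 0, 1]) ^ m)) ∧
    moebiusMDenom (A k) (x k) ≠ 0 ∧ moebiusM (A k) (x k) = x (k + 1)

open Fin.NatCast

lemma Tpow (lam : ℝ) (m : ℕ) :
    (!![1, -lam; 0, 1] : Matrix (Fin 2) (Fin 2) ℝ) ^ m = !![1, -(m * lam); 0, 1] := by
  induction m with
  | zero => simp [Matrix.one_fin_two]
  | succ k ih =>
      rw [pow_succ, ih, Matrix.mul_fin_two]
      push_cast
      congr 1 <;> ring

lemma moebius_denom_mul (B A : Matrix (Fin 2) (Fin 2) ℝ) (x : ℝ)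
    (hA : moebiusMDenom A x ≠ 0) :
    moebiusMDenom (B * A) x = moebiusMDenom B (moebiusM A x) * moebiusMDenom A x := by
  unfold moebiusMDenom moebiusM at *
  simp only [Matrix.mul_apply, Fin.sum_univ_two]
  field_simp
  ring

lemma moebius_mul (B A : Matrix (Fin 2) (Fin 2) ℝ) (x : ℝ)
    (hA : moebiusMDenom A x ≠ 0) (hB : moebiusMDenom B (moebiusM A x) ≠ 0) :
    moebiusM (B * A) x = moebiusM B (moebiusM A x) := by
  have hd := moebius_denom_mul B A x hA
  unfold moebiusMDenom moebiusM at *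
  simp only [Matrix.mul_apply, Fin.sum_univ_two]
  rw [div_eq_div_iff]
  · field_simp; ring
  · simp only [Matrix.mul_apply, Fin.sum_univ_two] at hd
    rw [hd]; exact mul_ne_zero hB hA
  · exact hB

lemma take_succ_prod (n : ℕ) (A : Fin (n+1) → Matrix (Fin 2) (Fin 2) ℝ) (k : ℕ)
    (hk : k < n + 1) :
    (((List.ofFn A).take (k+1)).reverse.prod) =
      A ⟨k, hk⟩ * (((List.ofFn A).take k).reverse.prod) := by
  rw [List.take_succ]
  have : (List.ofFn A)[k]? = some (A ⟨k, hk⟩) := by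
    rw [List.getElem?_eq_getElem (by simpa using hk), List.getElem_ofFn]
  rw [this]
  simp [List.reverse_append]

lemma det_one_core (t D : ℝ) (hD2 : D^2 < 1) (hDne : D ≠ 0) (hkey : t * D = D^2 + 1) :
    4 < t^2 := by
  have hD2pos : 0 < D^2 := lt_of_le_of_ne (sq_nonneg _) (Ne.symm (pow_ne_zero 2 hDne))
  have hstep : (t^2 - 4) * D^2 = (D^2 - 1)^2 := by
    linear_combination (t * D + D^2 + 1) * hkey
  have h0 : 0 < (D^2 - 1)^2 := by nlinarith
  by_contra hcon
  push_neg at hcon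
  have hle : (t^2 - 4) * D^2 ≤ 0 :=
    mul_nonpos_of_nonpos_of_nonneg (by linarith) (sq_nonneg _)
  rw [hstep] at hle
  linarith

lemma det_negone_core (t D : ℝ) (hD2 : D^2 < 1) (hkey : t * D = D^2 - 1) : t ≠ 0 := by
  intro h
  rw [h, zero_mul] at hkey
  nlinarith

lemma two_lt_abs_of_four_lt_sq (t : ℝ) (h : 4 < t^2) : 2 < |t| := by
  nlinarith [sq_abs t, abs_nonneg t]

lemma final_alg (M : Matrix (Fin 2) (Fin 2) ℝ) (x0 : ℝ)
    (hdet : M.det = 1 ∨ M.det = -1)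
    (hDne : moebiusMDenom M x0 ≠ 0)
    (hDlt : (moebiusMDenom M x0)^2 < 1)
    (hfix : moebiusM M x0 = x0) :
    (M.det = 1 ∨ M.det = -1) ∧
    2 < |Matrix.trace (M * M)| ∧
    (M.det = 1 → 2 < |Matrix.trace M|) ∧
    (M.det = -1 → Matrix.trace M ≠ 0) ∧
    moebiusMDenom M x0 ≠ 0 ∧
    moebiusM M x0 = x0 := by
  have hdet' := hdet
  have hDne' := hDne
  have hfix' := hfix
  obtain ⟨a, b, c, d, rfl⟩ : ∃ a b c d, M = !![a, b; c, d] :=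
    ⟨_, _, _, _, Matrix.eta_fin_two M⟩
  have hDdef : moebiusMDenom !![a, b; c, d] x0 = c * x0 + d := by
    simp [moebiusMDenom]
  have hMdef : moebiusM !![a, b; c, d] x0 = (a * x0 + b) / (c * x0 + d) := by
    simp [moebiusM]
  rw [hDdef] at hDne hDlt
  rw [hMdef] at hfix
  rw [Matrix.det_fin_two_of] at hdet
  have htr : Matrix.trace !![a, b; c, d] = a + d := by
    simp [Matrix.trace_fin_two]
  have htr2 : Matrix.trace (!![a, b; c, d] * !![a, b; c, d])
      = (a + d)^2 - 2 * (a * d - b * c) := by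
    rw [Matrix.mul_fin_two, Matrix.trace_fin_two]
    simp
    ring
  have hnum : a * x0 + b = x0 * (c * x0 + d) := by
    rw [div_eq_iff hDne] at hfix
    linarith
  have hkey : (a + d) * (c * x0 + d) = (c * x0 + d)^2 + (a * d - b * c) := by
    linear_combination c * hnum
  refine ⟨hdet', ?_, ?_, ?_, hDne', hfix'⟩
  · -- 2 < |tr (M*M)|
    rw [htr2]
    rcases hdet with hq | hq
    · have h4 : 4 < (a + d)^2 :=
        det_one_core (a + d) (c * x0 + d) hDlt hDne (by rw [hkey, hq])
      rw [hq, abs_of_pos (by linarith)]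
      linarith
    · have htne : (a + d) ≠ 0 :=
        det_negone_core (a + d) (c * x0 + d) hDlt (by rw [hkey, hq]; ring)
      have htpos : 0 < (a + d)^2 :=
        lt_of_le_of_ne (sq_nonneg _) (Ne.symm (pow_ne_zero 2 htne))
      rw [hq, abs_of_pos (by linarith)]
      linarith
  · -- det = 1 → 2 < |tr M|
    intro h1
    rw [Matrix.det_fin_two_of] at h1
    have h4 : 4 < (a + d)^2 :=
      det_one_core (a + d) (c * x0 + d) hDlt hDne (by rw [hkey, h1])
    rw [htr]
    exact two_lt_abs_of_four_lt_sq _ h4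
  · -- det = -1 → tr M ≠ 0
    intro h1
    rw [Matrix.det_fin_two_of] at h1
    rw [htr]
    exact det_negone_core (a + d) (c * x0 + d) hDlt (by rw [hkey, h1]; ring)

/-- For `λ > 2`, the product `A = Aₙ·…·A₁` of the matrices associated to an
`F_{I^J}`-periodic orbit has determinant `±1` and is hyperbolic: `|tr(A²)| > 2`;
equivalently, if `det A = 1` then `|tr A| > 2` and if `det A = −1` then `tr A ≠ 0`.
Moreover the Möbius transformation of `A` fixes `x₁`. -/
theorem FIJ_periodic_orbit_product_hyperbolic
    (lam : ℝ) (hlam : 2 < lam)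
    (n : ℕ) (x : Fin (n + 1) → ℝ) (A : Fin (n + 1) → Matrix (Fin 2) (Fin 2) ℝ)
    (horb : IsFIJPeriodicOrbit lam n x A) :
    ((List.ofFn A).reverse.prod.det = 1 ∨ (List.ofFn A).reverse.prod.det = -1) ∧
    2 < |Matrix.trace ((List.ofFn A).reverse.prod * (List.ofFn A).reverse.prod)| ∧
    ((List.ofFn A).reverse.prod.det = 1 →
      2 < |Matrix.trace ((List.ofFn A).reverse.prod)|) ∧
    ((List.ofFn A).reverse.prod.det = -1 →
      Matrix.trace ((List.ofFn A).reverse.prod) ≠ 0) ∧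
    moebiusMDenom ((List.ofFn A).reverse.prod) (x 0) ≠ 0 ∧
    moebiusM ((List.ofFn A).reverse.prod) (x 0) = x 0 := by
  set P : ℕ → Matrix (Fin 2) (Fin 2) ℝ := fun k => ((List.ofFn A).take k).reverse.prod with hP
  have key : ∀ k : ℕ, k ≤ n + 1 →
      ((P k).det = 1 ∨ (P k).det = -1) ∧
      moebiusMDenom (P k) (x 0) ≠ 0 ∧
      (moebiusMDenom (P k) (x 0))^2 ≤ 1 ∧
      moebiusM (P k) (x 0) = x ((k : ℕ) : Fin (n+1)) ∧
      ((moebiusMDenom (P k) (x 0))^2 < 1 ∨ x ((k : ℕ) : Fin (n+1)) ≤ x 0 - k * lam) := by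
    intro k
    induction k with
    | zero =>
        intro _
        have hP0 : P 0 = 1 := by simp [hP]
        refine ⟨?_, ?_, ?_, ?_, Or.inr ?_⟩ <;>
          simp [hP0, moebiusM, moebiusMDenom, Matrix.one_apply]
    | succ k ih =>
        intro hk1
        have hk : k < n + 1 := hk1
        obtain ⟨hdet, hDne, hD1, hfix, halt⟩ := ih (le_of_lt hk1)
        set k' : Fin (n+1) := ⟨k, hk⟩ with hk'
        have hcastk : ((k : ℕ) : Fin (n+1)) = k' := by
          exact Fin.ext (by simp [Fin.val_natCast, Nat.mod_eq_of_lt hk, hk'])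
        have hcastk1 : (((k+1 : ℕ)) : Fin (n+1)) = k' + 1 := by
          rw [← hcastk]; push_cast; ring
        rw [hcastk] at hfix halt
        obtain ⟨hcases, hdne, hstep⟩ := horb k'
        have hPs : P (k+1) = A k' * P k := take_succ_prod n A k hk
        have hdne' : moebiusMDenom (A k') (moebiusM (P k) (x 0)) ≠ 0 := by
          rw [hfix]; exact hdne
        have hDmul : moebiusMDenom (P (k+1)) (x 0)
            = moebiusMDenom (A k') (x (k' : Fin (n+1))) * moebiusMDenom (P k) (x 0) := by
          rw [hPs, moebius_denom_mul _ _ _ hDne, hfix]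
        have hMmul : moebiusM (P (k+1)) (x 0) = x (k' + 1) := by
          rw [hPs, moebius_mul _ _ _ hDne hdne', hfix, hstep]
        -- per-step facts
        have hD2nonneg : (0:ℝ) ≤ (moebiusMDenom (P k) (x 0))^2 := sq_nonneg _
        have hd : (moebiusMDenom (A k') (x k'))^2 ≤ 1 ∧
            ((A k').det = 1 ∨ (A k').det = -1) ∧
            ((moebiusMDenom (A k') (x k'))^2 < 1 ∨ x (k' + 1) ≤ x k' - lam) := by
          rcases hcases with ⟨hx, hAk⟩ | ⟨hx, hAk⟩ | ⟨m, hm, hx, hAk⟩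
          · have hden : moebiusMDenom (A k') (x k') = -(x k') := by
              rw [hAk]; simp [moebiusMDenom]
            obtain ⟨hx1, hx2⟩ := hx
            refine ⟨by nlinarith, Or.inl (by rw [hAk]; simp [Matrix.det_fin_two_of]),
              Or.inl (by rw [hden]; nlinarith)⟩
          · have hden : moebiusMDenom (A k') (x k') = x k' := by
              rw [hAk]; simp [moebiusMDenom]
            obtain ⟨hx1, hx2⟩ := hx
            refine ⟨by nlinarith, Or.inr (by rw [hAk]; simp [Matrix.det_fin_two_of]),
              Or.inl (by rw [hden]; nlinarith)⟩
          · rw [hAk, Tpow] at hdne hstep ⊢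
            have hden : moebiusMDenom !![1, -(m * lam); 0, 1] (x k') = 1 := by
              simp [moebiusMDenom]
            have hmov : moebiusM !![1, -(m * lam); 0, 1] (x k') = x k' - m * lam := by
              simp [moebiusM]; ring
            have hm1 : (1:ℝ) ≤ (m:ℝ) := by exact_mod_cast hm
            refine ⟨by rw [hden]; norm_num,
              Or.inl (by simp [Matrix.det_fin_two_of]),
              Or.inr ?_⟩
            rw [← hstep, hmov]
            nlinarith
        obtain ⟨hdle, hddet, hdalt⟩ := hd
        have hd2nonneg : (0:ℝ) ≤ (moebiusMDenom (A k') (x k'))^2 := sq_nonneg _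
        refine ⟨?_, ?_, ?_, ?_, ?_⟩
        · rw [hPs, Matrix.det_mul]
          rcases hddet with h1 | h1 <;> rcases hdet with h2 | h2 <;> rw [h1, h2] <;> norm_num
        · rw [hDmul]; exact mul_ne_zero hdne hDne
        · rw [hDmul, mul_pow]; nlinarith
        · rw [hMmul, hcastk1]
        · rcases hdalt with hdlt | hxle
          · left; rw [hDmul, mul_pow]; nlinarith
          · rcases halt with hDlt | hxle0
            · left; rw [hDmul, mul_pow]
              rcases lt_or_eq_of_le hdle with h | h
              · nlinarith
              · nlinarith
            · right
              rw [hcastk1]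
              push_cast
              linarith
  -- conclude
  obtain ⟨hdet, hDne, hD1, hfix, halt⟩ := key (n+1) le_rfl
  have hfull : P (n+1) = (List.ofFn A).reverse.prod := by
    show ((List.ofFn A).take (n+1)).reverse.prod = _
    rw [List.take_of_length_le (by simp)]
  have hcast0 : (((n+1 : ℕ)) : Fin (n+1)) = 0 := by
    exact Fin.ext (by simp)
  rw [hfull] at hdet hDne hD1 hfix halt
  rw [hcast0] at hfix halt
  have hDlt : (moebiusMDenom ((List.ofFn A).reverse.prod) (x 0))^2 < 1 := by
    rcases halt with h | h
    · exact h
    · exfalso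
      have hn0 : (0:ℝ) ≤ (n:ℝ) := Nat.cast_nonneg n
      push_cast at h
      nlinarith
  exact final_alg ((List.ofFn A).reverse.prod) (x 0) hdet hDne hDlt hfix
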